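/- Let M be a smooth finite-dimensional manifold, x ∈ M, a ∈ ℝ with a ≠ −1, X ∈ T_xM, and let Y₁, Y₂ be smooth vector fields on M with Y₁(x) = Y₂(x). Viewing Y₁, Y₂ as smooth sections M → TM, one has, inside the tangent space T_{Y₁(x)}(TM): dY₁(x)(X) + dY₂(x)(a·X) = dY(x)((1+a)·X), where Y is the smooth vector field Y = (1/(1+a))·Y₁ + (a/(1+a))·Y₂. -/

import Mathlib

open scoped Manifold
open Set Filter Topology

section
variable
    {E : Type*} [NormedAddCommGroup E] [NormedSpace ℝ E] [FiniteDimensional ℝ E]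
    {H : Type*} [TopologicalSpace H] {I : ModelWithCorners ℝ E H} [I.Boundaryless]
    {M : Type*} [TopologicalSpace M] [ChartedSpace H M] [IsManifold I (⊤ : ℕ∞) M]
    [T2Space M]

lemma statement16_aux {b c : ℝ} (hbc : b + c = 1) (x : M)
    (Y₁ Y₂ : ∀ z : M, TangentSpace I z)
    (hY₁ : ContMDiff I I.tangent (⊤ : ℕ∞) (fun z => (⟨z, Y₁ z⟩ : TangentBundle I M)))
    (hY₂ : ContMDiff I I.tangent (⊤ : ℕ∞) (fun z => (⟨z, Y₂ z⟩ : TangentBundle I M)))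
    (v : E) :
    @id (E × E) (mfderiv I I.tangent
        (fun z => (⟨z, b • Y₁ z + c • Y₂ z⟩ : TangentBundle I M)) x v)
    = b • @id (E × E) (mfderiv I I.tangent (fun z => (⟨z, Y₁ z⟩ : TangentBundle I M)) x v)
      + c • @id (E × E) (mfderiv I I.tangent (fun z => (⟨z, Y₂ z⟩ : TangentBundle I M)) x v) := by
  have hY : ContMDiff I I.tangent (⊤ : ℕ∞)
      (fun z => (⟨z, b • Y₁ z + c • Y₂ z⟩ : TangentBundle I M)) := by
    have := (b • (⟨Y₁, hY₁⟩ : Cₛ^(⊤ : ℕ∞)⟮I; E, TangentSpace I⟯)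
      + c • (⟨Y₂, hY₂⟩ : Cₛ^(⊤ : ℕ∞)⟮I; E, TangentSpace I⟯)).contMDiff
    simpa using this
  have hm₁ : MDifferentiableAt I I.tangent
      (fun z => (⟨z, Y₁ z⟩ : TangentBundle I M)) x := hY₁.mdifferentiableAt (by simp)
  have hm₂ : MDifferentiableAt I I.tangent
      (fun z => (⟨z, Y₂ z⟩ : TangentBundle I M)) x := hY₂.mdifferentiableAt (by simp)
  have hm : MDifferentiableAt I I.tangent
      (fun z => (⟨z, b • Y₁ z + c • Y₂ z⟩ : TangentBundle I M)) x := hY.mdifferentiableAt (by simp)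
  have hrange : range I = univ := I.range_eq_univ
  have hd₁ : DifferentiableAt ℝ
      (writtenInExtChartAt I I.tangent x (fun z => (⟨z, Y₁ z⟩ : TangentBundle I M)))
      (extChartAt I x x) := by
    have := hm₁.differentiableWithinAt_writtenInExtChartAt
    rwa [hrange, differentiableWithinAt_univ] at this
  have hd₂ : DifferentiableAt ℝ
      (writtenInExtChartAt I I.tangent x (fun z => (⟨z, Y₂ z⟩ : TangentBundle I M)))
      (extChartAt I x x) := by
    have := hm₂.differentiableWithinAt_writtenInExtChartAt
    rwa [hrange, differentiableWithinAt_univ] at this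
  -- the three sections, written in the (common) extended chart, are eventually related linearly
  have hext : ∀ (z : M) (v₀ : TangentSpace I x) (w : TangentSpace I z),
      extChartAt I.tangent (⟨x, v₀⟩ : TangentBundle I M) ⟨z, w⟩
        = (extChartAt I x z, (trivializationAt E (TangentSpace I) x ⟨z, w⟩).2) := by
    intro z v₀ w
    rw [FiberBundle.extChartAt]
    simp [Function.comp]
  have heq : writtenInExtChartAt I I.tangent x
        (fun z => (⟨z, b • Y₁ z + c • Y₂ z⟩ : TangentBundle I M))
      =ᶠ[𝓝 ((extChartAt I x) x)]
      fun u => b • writtenInExtChartAt I I.tangent x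
          (fun z => (⟨z, Y₁ z⟩ : TangentBundle I M)) u
        + c • writtenInExtChartAt I I.tangent x
          (fun z => (⟨z, Y₂ z⟩ : TangentBundle I M)) u := by
    filter_upwards [extChartAt_target_mem_nhds x] with u hu
    set z := (extChartAt I x).symm u with hz
    have hzb : z ∈ (chartAt H x).source := by
      have := (extChartAt I x).map_target hu
      rwa [extChartAt_source] at this
    have hlin := (trivializationAt E (TangentSpace I) x).linear ℝ
      (by rwa [TangentBundle.trivializationAt_baseSet])
    show extChartAt I.tangent (⟨x, b • Y₁ x + c • Y₂ x⟩ : TangentBundle I M)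
          ⟨z, b • Y₁ z + c • Y₂ z⟩
        = b • extChartAt I.tangent (⟨x, Y₁ x⟩ : TangentBundle I M) ⟨z, Y₁ z⟩
          + c • extChartAt I.tangent (⟨x, Y₂ x⟩ : TangentBundle I M) ⟨z, Y₂ z⟩
    rw [hext, hext, hext, hlin.map_add, hlin.map_smul, hlin.map_smul]
    ext
    · show (extChartAt I x z : E) = b • (extChartAt I x z : E) + c • (extChartAt I x z : E)
      rw [← add_smul, hbc, one_smul]
    · rfl
  rw [hm.mfderiv, hm₁.mfderiv, hm₂.mfderiv]
  simp only [hrange, fderivWithin_univ]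
  erw [heq.fderiv_eq, fderiv_fun_add ((hd₁.const_smul b)) ((hd₂.const_smul c)),
    fderiv_fun_const_smul hd₁ b, fderiv_fun_const_smul hd₂ c]
  rfl

end

/-- (The additivity step in the proof of Lemma 1.1.) Let `M` be a smooth
finite-dimensional manifold, `x ∈ M`, `a ∈ ℝ` with `a ≠ -1`, `X ∈ T_xM`, and `Y₁, Y₂`
smooth vector fields on `M` with `Y₁ x = Y₂ x`. Viewing `Y₁, Y₂` as smooth sections
`M → TM`, one has, inside `T_{Y₁ x}(TM)` (which, for the three total-space points
`⟨x, Y₁ x⟩ = ⟨x, Y₂ x⟩ = ⟨x, Y x⟩` involved, is definitionally the space `E × E`):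
`dY₁(x)(X) + dY₂(x)(a·X) = dY(x)((1+a)·X)` where `Y = (1/(1+a))·Y₁ + (a/(1+a))·Y₂`. -/
theorem statement16
    {E : Type*} [NormedAddCommGroup E] [NormedSpace ℝ E] [FiniteDimensional ℝ E]
    {H : Type*} [TopologicalSpace H] {I : ModelWithCorners ℝ E H} [I.Boundaryless]
    {M : Type*} [TopologicalSpace M] [ChartedSpace H M] [IsManifold I (⊤ : ℕ∞) M]
    [T2Space M]
    (x : M) (a : ℝ) (ha : a ≠ -1) (X : TangentSpace I x)
    (Y₁ Y₂ : ∀ z : M, TangentSpace I z)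
    (hY₁ : ContMDiff I I.tangent (⊤ : ℕ∞) (fun z => (⟨z, Y₁ z⟩ : TangentBundle I M)))
    (hY₂ : ContMDiff I I.tangent (⊤ : ℕ∞) (fun z => (⟨z, Y₂ z⟩ : TangentBundle I M)))
    (hx : Y₁ x = Y₂ x) :
    @id (E × E) (mfderiv I I.tangent (fun z => (⟨z, Y₁ z⟩ : TangentBundle I M)) x X)
      + @id (E × E) (mfderiv I I.tangent (fun z => (⟨z, Y₂ z⟩ : TangentBundle I M)) x (a • X))
    = @id (E × E) (mfderiv I I.tangent
        (fun z => (⟨z, (1/(1+a)) • Y₁ z + (a/(1+a)) • Y₂ z⟩ : TangentBundle I M)) x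
        ((1+a) • X)) := by
  have h1 : (1:ℝ) + a ≠ 0 := fun h => ha (by linarith)
  have hbc : (1/(1+a)) + (a/(1+a)) = (1:ℝ) := by field_simp
  have key := statement16_aux hbc x Y₁ Y₂ hY₁ hY₂ ((1+a) • X)
  rw [key]
  have e₁ : mfderiv I I.tangent (fun z => (⟨z, Y₁ z⟩ : TangentBundle I M)) x ((1+a) • X)
      = (1+a) • mfderiv I I.tangent (fun z => (⟨z, Y₁ z⟩ : TangentBundle I M)) x X :=
    (mfderiv I I.tangent (fun z => (⟨z, Y₁ z⟩ : TangentBundle I M)) x).map_smul _ _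
  have e₂ : mfderiv I I.tangent (fun z => (⟨z, Y₂ z⟩ : TangentBundle I M)) x ((1+a) • X)
      = (1+a) • mfderiv I I.tangent (fun z => (⟨z, Y₂ z⟩ : TangentBundle I M)) x X :=
    (mfderiv I I.tangent (fun z => (⟨z, Y₂ z⟩ : TangentBundle I M)) x).map_smul _ _
  have e₃ : mfderiv I I.tangent (fun z => (⟨z, Y₂ z⟩ : TangentBundle I M)) x (a • X)
      = a • mfderiv I I.tangent (fun z => (⟨z, Y₂ z⟩ : TangentBundle I M)) x X :=
    (mfderiv I I.tangent (fun z => (⟨z, Y₂ z⟩ : TangentBundle I M)) x).map_smul _ _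
  rw [e₁, e₂, e₃]
  erw [id_eq, id_eq, id_eq, id_eq, smul_smul, smul_smul]
  rw [div_mul_cancel₀ _ h1, div_mul_cancel₀ _ h1]
  norm_num
  erw [one_smul]
  exact rfl
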